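/- On S^n, for any vector field B, the sum of squared Lie derivatives along the gradient-type fields A_i(x)=e_i-⟨x,e_i⟩x satisfies Σ_{i=1}^{n+1} L_{A_i}² B = ΔB + (n+1)B, where ΔB = Σ_i ∇_{A_i}∇_{A_i}B is the connection (rough) Laplacian. -/

import Mathlib

noncomputable section

/-- The tangential projection at `x` on the sphere: `P_x(y) = y - ⟨x,y⟩x`. -/
def sphProj {n : ℕ} (x y : EuclideanSpace ℝ (Fin (n+1))) : EuclideanSpace ℝ (Fin (n+1)) :=
  y - (inner ℝ x y : ℝ) • x

/-- The tangential field `A_e(y) = e - ⟨y,e⟩y` associated to a fixed `e ∈ ℝ^{n+1}`. -/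
def sphA {n : ℕ} (e y : EuclideanSpace ℝ (Fin (n+1))) : EuclideanSpace ℝ (Fin (n+1)) :=
  e - (inner ℝ y e : ℝ) • y

/-- Covariant derivative on the sphere: tangential projection of the ambient
directional derivative. -/
def sphCov {n : ℕ} (B : EuclideanSpace ℝ (Fin (n+1)) → EuclideanSpace ℝ (Fin (n+1)))
    (x v : EuclideanSpace ℝ (Fin (n+1))) : EuclideanSpace ℝ (Fin (n+1)) :=
  sphProj x (fderiv ℝ B x v)

/-- Lie derivative (Lie bracket) of tangent vector fields on the sphere:
`L_A B = ∇_A B - ∇_B A` (torsion-freeness). -/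
def sphLie {n : ℕ} (A B : EuclideanSpace ℝ (Fin (n+1)) → EuclideanSpace ℝ (Fin (n+1)))
    (x : EuclideanSpace ℝ (Fin (n+1))) : EuclideanSpace ℝ (Fin (n+1)) :=
  sphCov B x (A x) - sphCov A x (B x)

namespace SphAux

variable {n : ℕ}

local notation "E" => EuclideanSpace ℝ (Fin (n+1))

/-- Derivative of the field `A_c`. -/
def AL (c x : E) : E →L[ℝ] E :=
  -((inner ℝ x c : ℝ) • ContinuousLinearMap.id ℝ E + (innerSL ℝ c).smulRight x)

lemma AL_apply (c x v : E) :
    AL c x v = -((inner ℝ x c : ℝ) • v + (inner ℝ v c : ℝ) • x) := by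
  simp only [AL, ContinuousLinearMap.neg_apply, ContinuousLinearMap.add_apply,
    ContinuousLinearMap.smul_apply, ContinuousLinearMap.coe_id', id_eq,
    ContinuousLinearMap.smulRight_apply, innerSL_apply_apply]
  rw [real_inner_comm c v]

lemma hasFDerivAt_inner_right (c x : E) :
    HasFDerivAt (fun y : E => (inner ℝ y c : ℝ)) (innerSL ℝ c) x :=
  ((innerSL ℝ c).hasFDerivAt).congr_of_eventuallyEq
    (Filter.Eventually.of_forall fun y => by rw [innerSL_apply_apply, real_inner_comm])

lemma hasFDerivAt_sphA (c x : E) : HasFDerivAt (sphA c) (AL c x) x := by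
  have h2 := (hasFDerivAt_const c x).sub ((hasFDerivAt_inner_right c x).smul (hasFDerivAt_id x))
  have hAL : AL c x = 0 - ((inner ℝ x c : ℝ) • ContinuousLinearMap.id ℝ E
      + (innerSL ℝ c).smulRight x) := by rw [AL, zero_sub]
  rw [hAL]
  exact h2

end SphAux

namespace SphAux

variable {n : ℕ}
local notation "E" => EuclideanSpace ℝ (Fin (n+1))

lemma fderiv_proj_apply {g : E → E} {g' : E →L[ℝ] E} {x : E} (hg : HasFDerivAt g g' x) (v : E) :
    fderiv ℝ (fun y => sphProj y (g y)) x v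
      = g' v - ((inner ℝ v (g x) : ℝ) + (inner ℝ x (g' v) : ℝ)) • x - (inner ℝ x (g x) : ℝ) • v := by
  have h1 := HasFDerivAt.inner (𝕜 := ℝ) (hasFDerivAt_id x) hg
  have h2 := hg.sub (h1.smul (hasFDerivAt_id x))
  simp only [id_eq] at h2
  have h3 : (fun y => sphProj y (g y)) = fun y : E => g y - (inner ℝ y (g y) : ℝ) • y := rfl
  rw [h3, HasFDerivAt.fderiv (f := fun y : E => g y - (inner ℝ y (g y) : ℝ) • y) h2]
  simp only [ContinuousLinearMap.coe_sub', Pi.sub_apply, ContinuousLinearMap.add_apply,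
    ContinuousLinearMap.smul_apply, ContinuousLinearMap.coe_id', id_eq,
    ContinuousLinearMap.smulRight_apply, ContinuousLinearMap.comp_apply,
    ContinuousLinearMap.prod_apply, fderivInnerCLM_apply]
  module

end SphAux

namespace SphAux

variable {n : ℕ}
local notation "E" => EuclideanSpace ℝ (Fin (n+1))

lemma key (B : E → E) (hB : ContDiff ℝ 2 B) (c x : E) (hxx : (inner ℝ x x : ℝ) = 1)
    (hbx : (inner ℝ (B x) x : ℝ) = 0) :
    sphLie (sphA c) (sphLie (sphA c) B) x
      = sphCov (fun y => sphCov B y (sphA c y)) x (sphA c x)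
        + (inner ℝ c c : ℝ) • B x + (2 * (inner ℝ x c : ℝ)) • sphCov B x (sphA c x) := by
  have hBd : ∀ y : E, HasFDerivAt B (fderiv ℝ B y) y := fun y =>
    (hB.differentiable (by norm_num) y).hasFDerivAt
  have hB1 : ContDiff ℝ 1 (fderiv ℝ B) := hB.fderiv_right le_rfl
  have hB'' : HasFDerivAt (fderiv ℝ B) (fderiv ℝ (fderiv ℝ B) x) x :=
    (hB1.differentiable one_ne_zero x).hasFDerivAt
  have hw : HasFDerivAt (fun y : E => fderiv ℝ B y (sphA c y)) _ x :=
    hB''.clm_apply (hasFDerivAt_sphA c x)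
  have hgB : HasFDerivAt (fun y : E => (inner ℝ (B y) c : ℝ)) _ x :=
    HasFDerivAt.inner (𝕜 := ℝ) (hBd x) (hasFDerivAt_const c x)
  have hg : HasFDerivAt (fun y : E => fderiv ℝ B y (sphA c y)
      + (inner ℝ (B y) c : ℝ) • y + (inner ℝ y c : ℝ) • B y) _ x :=
    (hw.add (hgB.smul (hasFDerivAt_id x))).add ((hasFDerivAt_inner_right c x).smul (hBd x))
  have hC : sphLie (sphA c) B = fun y : E => sphProj y (fderiv ℝ B y (sphA c y)
      + (inner ℝ (B y) c : ℝ) • y + (inner ℝ y c : ℝ) • B y) := by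
    funext y
    simp only [sphLie, sphCov, (hasFDerivAt_sphA c y).fderiv, AL_apply, sphProj,
      inner_add_right, inner_neg_right, real_inner_smul_right]
    module
  rw [show sphLie (sphA c) (sphLie (sphA c) B) x
      = sphProj x (fderiv ℝ (sphLie (sphA c) B) x (sphA c x))
        - sphProj x (fderiv ℝ (sphA c) x (sphLie (sphA c) B x)) from rfl]
  rw [(hasFDerivAt_sphA c x).fderiv]
  rw [hC, fderiv_proj_apply hg (sphA c x)]
  rw [show sphCov (fun y => sphCov B y (sphA c y)) x (sphA c x)
      = sphProj x (fderiv ℝ (fun y : E => sphProj y (fderiv ℝ B y (sphA c y))) x (sphA c x))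
        from rfl]
  rw [fderiv_proj_apply hw (sphA c x)]
  have hbx2 : (inner ℝ x (B x) : ℝ) = 0 := by rw [real_inner_comm]; exact hbx
  simp only [sphCov, sphA, sphProj, AL_apply, ContinuousLinearMap.add_apply,
    ContinuousLinearMap.comp_apply, ContinuousLinearMap.flip_apply,
    ContinuousLinearMap.smul_apply, ContinuousLinearMap.smulRight_apply,
    ContinuousLinearMap.coe_id', id_eq, ContinuousLinearMap.prod_apply, fderivInnerCLM_apply,
    ContinuousLinearMap.coe_sub', Pi.sub_apply, Pi.add_apply, Pi.smul_apply,
    ContinuousLinearMap.sub_apply, ContinuousLinearMap.neg_apply, ContinuousLinearMap.zero_apply,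
    map_sub, map_add, map_smul, map_neg, map_zero,
    inner_add_left, inner_add_right, inner_sub_left, inner_sub_right,
    real_inner_smul_left, real_inner_smul_right, inner_neg_left, inner_neg_right,
    innerSL_apply_apply, real_inner_comm c x, hxx, hbx, hbx2]
  match_scalars <;> ring

end SphAux

/-- On `Sⁿ`, for any tangent vector field `B`,
`Σ_{i=1}^{n+1} L_{A_i}² B = ΔB + (n+1)B`, where `ΔB = Σ_i ∇_{A_i}∇_{A_i}B`
is the connection (rough) Laplacian. -/
theorem sphere_sum_lie_sq {n : ℕ} (e : Fin (n+1) → EuclideanSpace ℝ (Fin (n+1)))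
    (he : Orthonormal ℝ e)
    (B : EuclideanSpace ℝ (Fin (n+1)) → EuclideanSpace ℝ (Fin (n+1)))
    (hB : ContDiff ℝ 2 B)
    (hBtan : ∀ y : EuclideanSpace ℝ (Fin (n+1)), ‖y‖ = 1 → (inner ℝ (B y) y : ℝ) = 0)
    (x : EuclideanSpace ℝ (Fin (n+1))) (hx : ‖x‖ = 1) :
    ∑ i, sphLie (sphA (e i)) (sphLie (sphA (e i)) B) x
      = (∑ i, sphCov (fun y => sphCov B y (sphA (e i) y)) x (sphA (e i) x))
        + ((n : ℝ) + 1) • B x := by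

  have hxx : (inner ℝ x x : ℝ) = 1 := by
    rw [real_inner_self_eq_norm_mul_norm, hx, one_mul]
  have hbx := hBtan x hx
  have card : Fintype.card (Fin (n+1)) = Module.finrank ℝ (EuclideanSpace ℝ (Fin (n+1))) := by
    simp
  let bb := basisOfOrthonormalOfCardEqFinrank he card
  have hbbe : ⇑bb = e := coe_basisOfOrthonormalOfCardEqFinrank he card
  have heb : Orthonormal ℝ ⇑bb := by rwa [hbbe]
  let ob := bb.toOrthonormalBasis heb
  have hobe : ⇑ob = e := by rw [Module.Basis.coe_toOrthonormalBasis, hbbe]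
  have F1 : ∑ i, ((inner ℝ x (e i) : ℝ)) • e i = x := by
    have h := ob.sum_repr' x
    rw [hobe] at h
    calc ∑ i, ((inner ℝ x (e i) : ℝ)) • e i = ∑ i, ((inner ℝ (e i) x : ℝ)) • e i :=
          Finset.sum_congr rfl fun i _ => by rw [real_inner_comm]
      _ = x := h
  have F2 : ∑ i, (inner ℝ x (e i) : ℝ) * (inner ℝ x (e i) : ℝ) = 1 := by
    have h := ob.sum_inner_mul_inner x x
    rw [hobe] at h
    calc ∑ i, (inner ℝ x (e i) : ℝ) * (inner ℝ x (e i) : ℝ)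
        = ∑ i, (inner ℝ x (e i) : ℝ) * (inner ℝ (e i) x : ℝ) :=
          Finset.sum_congr rfl fun i _ => by rw [real_inner_comm x (e i)]
      _ = (inner ℝ x x : ℝ) := h
      _ = 1 := hxx
  -- linearity of sphCov B x
  let L : EuclideanSpace ℝ (Fin (n+1)) →ₗ[ℝ] EuclideanSpace ℝ (Fin (n+1)) :=
    { toFun := fun v => sphCov B x v
      map_add' := by
        intro a b
        simp only [sphCov, sphProj, map_add, inner_add_right]
        module
      map_smul' := by
        intro r a
        simp only [sphCov, sphProj, map_smul, real_inner_smul_right, RingHom.id_apply]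
        module }
  have hsum0 : ∑ i, ((2:ℝ) * (inner ℝ x (e i) : ℝ)) • sphA (e i) x = 0 := by
    have hterm : ∀ i, ((2:ℝ) * (inner ℝ x (e i) : ℝ)) • sphA (e i) x
        = (2:ℝ) • ((inner ℝ x (e i) : ℝ) • e i)
          - ((2:ℝ) * ((inner ℝ x (e i) : ℝ) * (inner ℝ x (e i) : ℝ))) • x := by
      intro i
      simp only [sphA]
      module
    rw [Finset.sum_congr rfl fun i _ => hterm i, Finset.sum_sub_distrib, ← Finset.smul_sum,
      ← Finset.sum_smul, ← Finset.mul_sum, F1, F2]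
    norm_num
  have hS : ∑ i, ((2:ℝ) * (inner ℝ x (e i) : ℝ)) • sphCov B x (sphA (e i) x) = 0 := by
    have : ∀ i : Fin (n+1), ((2:ℝ) * (inner ℝ x (e i) : ℝ)) • sphCov B x (sphA (e i) x)
        = L (((2:ℝ) * (inner ℝ x (e i) : ℝ)) • sphA (e i) x) := fun i => (L.map_smul _ _).symm
    rw [Finset.sum_congr rfl fun i _ => this i, ← map_sum, hsum0, map_zero]
  have hkey : ∀ i, sphLie (sphA (e i)) (sphLie (sphA (e i)) B) x
      = sphCov (fun y => sphCov B y (sphA (e i) y)) x (sphA (e i) x)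
        + (1:ℝ) • B x + ((2:ℝ) * (inner ℝ x (e i) : ℝ)) • sphCov B x (sphA (e i) x) := by
    intro i
    have hee : (inner ℝ (e i) (e i) : ℝ) = 1 := by
      rw [real_inner_self_eq_norm_mul_norm, he.1 i, one_mul]
    have h := SphAux.key B hB (e i) x hxx hbx
    rwa [hee] at h
  rw [Finset.sum_congr rfl fun i _ => hkey i, Finset.sum_add_distrib, Finset.sum_add_distrib, hS,
    add_zero, Finset.sum_const, Finset.card_univ, Fintype.card_fin]
  congr 1
  rw [one_smul, ← Nat.cast_smul_eq_nsmul ℝ]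
  push_cast
  rfl
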